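/- (Dyadic Carleson embedding) Let μ be a finite measure, 𝒟 a dyadic lattice, and {a_L}_{L∈𝒟} nonnegative numbers satisfying Σ_{L ⊂ R, L ∈ 𝒟} a_L ≤ μ(R) for every R ∈ 𝒟. Then for every f ∈ L²(μ): Σ_{L∈𝒟} a_L |⟨f⟩_{L,μ}|² ≤ 4 ‖f‖²_{L²(μ)}, where ⟨f⟩_{L,μ} = μ(L)^{-1} ∫_L f dμ. -/

import Mathlib

open MeasureTheory

/-- dyadic Carleson embedding: if nonnegative numbers `a L` attached to the
cubes of a dyadic lattice (nested-or-disjoint family `S`) satisfy the packing condition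
`Σ_{L ⊆ R} a L ≤ μ(R)` for every cube `R`, then for every `f ∈ L²(μ)`
`Σ_L a L |⟨f⟩_{L,μ}|² ≤ 4‖f‖²_{L²(μ)}` (stated via arbitrary finite subfamilies, which
is equivalent for nonnegative terms). -/

private lemma chain_le_head {x : ℝ} {xs : List ℝ} (h : List.Chain' (· > ·) (x :: xs)) :
    ∀ y ∈ x :: xs, y ≤ x := by
  intro y hy
  rcases List.mem_cons.mp hy with rfl | hy
  · exact le_rfl
  · exact (List.rel_of_pairwise_cons (List.isChain_iff_pairwise.mp h) hy).le

private lemma zip_tail_mem : ∀ (l : List ℝ), List.Chain' (· > ·) l →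
    ∀ p ∈ l.zip l.tail, p.2 < p.1 ∧ p.1 ∈ l ∧ p.2 ∈ l
  | [], _, p, hp => by simp at hp
  | [a], _, p, hp => by simp at hp
  | a :: b :: t, h, p, hp => by
    rw [List.tail_cons, List.zip_cons_cons] at hp
    rcases List.mem_cons.mp hp with rfl | hp
    · exact ⟨(List.isChain_cons_cons.mp h).1, by simp, by simp⟩
    · have h2 := (List.isChain_cons_cons.mp h).2
      have := zip_tail_mem (b :: t) h2 p (by simpa using hp)
      exact ⟨this.1, List.mem_cons_of_mem _ this.2.1, List.mem_cons_of_mem _ this.2.2⟩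

private lemma zip_tele (f : ℝ → ℝ) : ∀ (l : List ℝ), List.Chain' (· > ·) l → ∀ c ∈ l,
    ((l.zip l.tail).map (fun p => if p.1 ≤ c then f p.1 - f p.2 else 0)).sum
      = f c - f (l.getLastD 0)
  | [], _, c, hc => by simp at hc
  | [a], _, c, hc => by
    simp only [List.mem_singleton] at hc; subst hc; simp
  | a :: b :: t, h, c, hc => by
    obtain ⟨hab, h2⟩ := List.isChain_cons_cons.mp h
    rw [List.tail_cons, List.zip_cons_cons, List.map_cons, List.sum_cons]
    have hlast : (a :: b :: t).getLastD 0 = (b :: t).getLastD 0 := by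
      rw [List.getLastD_cons, List.getLastD_cons, List.getLastD_cons]
    have hIH := zip_tele f (b :: t) h2
    have htl : (b :: t).tail = t := rfl
    rcases List.mem_cons.mp hc with rfl | hc
    · have hmemle : ∀ p ∈ (b :: t).zip t, p.1 ≤ b := fun p hp =>
        chain_le_head h2 p.1 (List.of_mem_zip hp).1
      have hcongr : ((( b :: t).zip t).map (fun p => if p.1 ≤ c then f p.1 - f p.2 else 0)).sum
          = (((b :: t).zip t).map (fun p => if p.1 ≤ b then f p.1 - f p.2 else 0)).sum := by
        congr 1
        refine List.map_congr_left (fun p hp => ?_)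
        rw [if_pos ((hmemle p hp).trans hab.le), if_pos (hmemle p hp)]
      rw [if_pos le_rfl, hcongr, hlast]
      have := hIH b (by simp)
      rw [htl] at this
      rw [this]; ring
    · have hcb : c ≤ b := chain_le_head h2 c hc
      rw [if_neg (by linarith), hlast]
      have := hIH c hc
      rw [htl] at this
      rw [this]; ring

private lemma zip_key (q : ℝ → Prop) [DecidablePred q] : ∀ (l : List ℝ),
    List.Chain' (· > ·) l → (∀ u ∈ l, 0 ≤ u) →
    ((l.zip l.tail).map (fun p => if q p.1 then p.1 - p.2 else 0)).sum ≤ l.headD 0 ∧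
    ((l.zip l.tail).map (fun p => if q p.1 then p.1 - p.2 else 0)).sum ^ 2
      ≤ ((l.zip l.tail).map (fun p => if q p.1 then p.1 ^ 2 - p.2 ^ 2 else 0)).sum
  | [], _, _ => by simp
  | [a], _, h0 => by
    constructor
    · simpa using h0 a (by simp)
    · simp
  | a :: b :: t, h, h0 => by
    obtain ⟨hab, h2⟩ := List.isChain_cons_cons.mp h
    obtain ⟨ih1, ih2⟩ := zip_key q (b :: t) h2 (fun u hu => h0 u (List.mem_cons_of_mem _ hu))
    rw [List.tail_cons] at ih1 ih2 ⊢
    rw [List.zip_cons_cons, List.map_cons, List.sum_cons, List.map_cons, List.sum_cons]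
    rw [List.headD_cons] at ih1 ⊢
    set m := (((b :: t).zip t).map (fun p => if q p.1 then p.1 - p.2 else 0)).sum with hm
    set n := (((b :: t).zip t).map (fun p => if q p.1 then p.1 ^ 2 - p.2 ^ 2 else 0)).sum with hn
    by_cases hq : q a
    · rw [if_pos hq, if_pos hq]
      exact ⟨by linarith, by nlinarith⟩
    · rw [if_neg hq, if_neg hq]
      exact ⟨by linarith, by simpa using ih2⟩

private lemma finset_sum_list_sum {β γ : Type*} (P : List β) (s : Finset γ) (ψ : γ → β → ℝ) :
    ∑ c ∈ s, (P.map (ψ c)).sum = (P.map (fun b => ∑ c ∈ s, ψ c b)).sum := by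
  induction P with
  | nil => simp
  | cons hd tl ih => simp [Finset.sum_add_distrib, ih]

private lemma integrable_list_sum {α β : Type*} [MeasurableSpace α] {μ : Measure α} (P : List β)
    (φ : β → α → ℝ) (h : ∀ p ∈ P, Integrable (φ p) μ) :
    Integrable (fun x => (P.map (fun p => φ p x)).sum) μ := by
  induction P with
  | nil => simpa using integrable_const (0 : ℝ) |>.congr (by simp)
  | cons hd tl ih =>
      simp only [List.map_cons, List.sum_cons]
      exact ((h hd (by simp)).add (ih fun p hp => h p (by simp [hp])))

private lemma integral_list_sum {α β : Type*} [MeasurableSpace α] {μ : Measure α} (P : List β)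
    (φ : β → α → ℝ) (h : ∀ p ∈ P, Integrable (φ p) μ) :
    ∫ x, (P.map (fun p => φ p x)).sum ∂μ = (P.map (fun p => ∫ x, φ p x ∂μ)).sum := by
  induction P with
  | nil => simp
  | cons hd tl ih =>
      simp only [List.map_cons, List.sum_cons]
      rw [integral_add (h hd (by simp)) (integrable_list_sum tl φ (fun p hp => h p (by simp [hp]))),
        ih (fun p hp => h p (by simp [hp]))]
private lemma covering {α ι : Type*} [MeasurableSpace α] (μ : Measure α) [IsFiniteMeasure μ]
    (S : ι → Set α) (hSm : ∀ L, MeasurableSet (S L))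
    (hlat : ∀ L L', S L ⊆ S L' ∨ S L' ⊆ S L ∨ Disjoint (S L) (S L'))
    (a : ι → ℝ) (ha : ∀ L, 0 ≤ a L)
    (hCarl : ∀ R : ι, ∀ 𝔉 : Finset ι, (∀ L ∈ 𝔉, S L ⊆ S R) →
      ∑ L ∈ 𝔉, a L ≤ (μ (S R)).toReal)
    (g : α → ℝ) (hgi : Integrable g μ)
    (s : ℝ) (𝔉 : Finset ι)
    (h𝔉 : ∀ L ∈ 𝔉, s * (μ (S L)).toReal ≤ ∫ x in S L, g x ∂μ) :
    ∑ L ∈ 𝔉, a L ≤ (μ (⋃ L ∈ 𝔉, S L)).toReal ∧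
      s * (μ (⋃ L ∈ 𝔉, S L)).toReal ≤ ∫ x in ⋃ L ∈ 𝔉, S L, g x ∂μ := by
  classical
  set F := ⋃ L ∈ 𝔉, S L with hF
  set 𝔖 : Finset (Set α) := 𝔉.image S with h𝔖
  set 𝒯 : Finset (Set α) := 𝔖.filter (fun T => ∀ T' ∈ 𝔖, T ⊆ T' → T = T') with h𝒯
  have hmax : ∀ T ∈ 𝔖, ∃ U ∈ 𝒯, T ⊆ U := by
    intro T hT
    obtain ⟨U, hU, hUmax⟩ := Set.Finite.exists_maximalFor (id : Set α → Set α)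
      {T' | T' ∈ 𝔖 ∧ T ⊆ T'} (Set.Finite.subset 𝔖.finite_toSet (fun x hx => hx.1))
      ⟨T, hT, subset_rfl⟩
    refine ⟨U, ?_, hU.2⟩
    rw [h𝒯, Finset.mem_filter]
    exact ⟨hU.1, fun T' hT' hUT' => Set.Subset.antisymm hUT' (hUmax ⟨hT', hU.2.trans hUT'⟩ hUT')⟩
  have hrep : ∀ U ∈ 𝒯, ∃ R ∈ 𝔉, S R = U := by
    intro U hU
    have h1 := (Finset.mem_filter.mp hU).1
    rw [h𝔖] at h1
    simpa using Finset.mem_image.mp h1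
  have hmaxprop : ∀ U ∈ 𝒯, ∀ T' ∈ 𝔖, U ⊆ T' → U = T' := fun U hU => (Finset.mem_filter.mp hU).2
  have hdisj : (↑𝒯 : Set (Set α)).PairwiseDisjoint id := by
    intro U hU U' hU' hne
    obtain ⟨R, hR, rfl⟩ := hrep U hU
    obtain ⟨R', hR', rfl⟩ := hrep U' hU'
    rcases hlat R R' with h1 | h1 | h1
    · exact absurd (hmaxprop _ hU _ (Finset.mem_image_of_mem S hR') h1) hne
    · exact absurd (hmaxprop _ hU' _ (Finset.mem_image_of_mem S hR) h1).symm hne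
    · exact Set.disjoint_iff_inter_eq_empty.mpr (Set.disjoint_iff_inter_eq_empty.mp h1)
  have h𝒯meas : ∀ U ∈ 𝒯, MeasurableSet U := by
    intro U hU; obtain ⟨R, _, rfl⟩ := hrep U hU; exact hSm R
  have hFU : F = ⋃ U ∈ 𝒯, U := by
    apply Set.Subset.antisymm
    · rw [hF]
      refine Set.iUnion₂_subset (fun L hL => ?_)
      obtain ⟨U, hU, hTU⟩ := hmax (S L) (Finset.mem_image_of_mem S hL)
      exact hTU.trans (Set.subset_biUnion_of_mem (u := fun U => U) hU)
    · refine Set.iUnion₂_subset (fun U hU => ?_)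
      obtain ⟨R, hR, rfl⟩ := hrep U hU
      rw [hF]
      exact Set.subset_biUnion_of_mem hR
  have hμ : μ F = ∑ U ∈ 𝒯, μ U := by
    rw [hFU]; exact measure_biUnion_finset hdisj h𝒯meas
  have hμtoReal : (μ F).toReal = ∑ U ∈ 𝒯, (μ U).toReal := by
    rw [hμ]; exact ENNReal.toReal_sum (fun U _ => measure_ne_top μ U)
  constructor
  · calc ∑ L ∈ 𝔉, a L ≤ ∑ U ∈ 𝒯, ∑ L ∈ 𝔉, if S L ⊆ U then a L else 0 := by
          rw [Finset.sum_comm]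
          refine Finset.sum_le_sum (fun L hL => ?_)
          obtain ⟨U, hU, hTU⟩ := hmax (S L) (Finset.mem_image_of_mem S hL)
          have h1 := Finset.single_le_sum (f := fun U' => if S L ⊆ U' then a L else 0)
            (fun U' _ => by split_ifs; exacts [ha L, le_rfl]) hU
          simpa [if_pos hTU] using h1
      _ ≤ ∑ U ∈ 𝒯, (μ U).toReal := by
          refine Finset.sum_le_sum (fun U hU => ?_)
          obtain ⟨R, hR, rfl⟩ := hrep U hU
          rw [← Finset.sum_filter]
          exact hCarl R _ (fun L hL => (Finset.mem_filter.mp hL).2)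
      _ = (μ F).toReal := hμtoReal.symm
  · have hint : ∫ x in F, g x ∂μ = ∑ U ∈ 𝒯, ∫ x in U, g x ∂μ := by
      rw [hFU]
      exact integral_biUnion_finset 𝒯 h𝒯meas hdisj (fun U _ => hgi.integrableOn)
    rw [hint, hμtoReal, Finset.mul_sum]
    refine Finset.sum_le_sum (fun U hU => ?_)
    obtain ⟨R, hR, rfl⟩ := hrep U hU
    exact h𝔉 R hR


theorem dyadic_carleson_embedding {α ι : Type*} [MeasurableSpace α]
    (μ : Measure α) [IsFiniteMeasure μ]
    (S : ι → Set α) (hSm : ∀ L, MeasurableSet (S L))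
    (hlat : ∀ L L', S L ⊆ S L' ∨ S L' ⊆ S L ∨ Disjoint (S L) (S L'))
    (a : ι → ℝ) (ha : ∀ L, 0 ≤ a L)
    (hCarl : ∀ R : ι, ∀ 𝔉 : Finset ι, (∀ L ∈ 𝔉, S L ⊆ S R) →
      ∑ L ∈ 𝔉, a L ≤ (μ (S R)).toReal)
    (f : α → ℝ) (hfm : Measurable f) (hf : MemLp f 2 μ) :
    ∀ 𝔊 : Finset ι,
      ∑ L ∈ 𝔊, a L * ((∫ x in S L, f x ∂μ) / (μ (S L)).toReal) ^ 2
        ≤ 4 * ∫ x, (f x) ^ 2 ∂μ := by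
  classical
  intro 𝔊
  set g : α → ℝ := fun x => |f x| with hgdef
  have hg0 : ∀ x, 0 ≤ g x := fun x => abs_nonneg _
  have hg2 : MemLp g 2 μ := by
    rw [hgdef]
    simpa [Real.norm_eq_abs] using hf.norm
  have hgi : Integrable g μ := hg2.integrable one_le_two
  have hgsq : Integrable (fun x => g x ^ 2) μ := hg2.integrable_sq
  have hsqeq : ∫ x, g x ^ 2 ∂μ = ∫ x, f x ^ 2 ∂μ := by
    rw [hgdef]; simp [sq_abs]
  set A : ι → ℝ := fun L => (∫ x in S L, g x ∂μ) / (μ (S L)).toReal with hA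
  have hA0 : ∀ L, 0 ≤ A L := fun L =>
    div_nonneg (setIntegral_nonneg (hSm L) fun x _ => hg0 x) ENNReal.toReal_nonneg
  -- reduction from f to g = |f|
  have hfg : ∀ L, ((∫ x in S L, f x ∂μ) / (μ (S L)).toReal) ^ 2 ≤ A L ^ 2 := by
    intro L
    have habs : |∫ x in S L, f x ∂μ| ≤ ∫ x in S L, g x ∂μ := by
      rw [hgdef]
      simpa [Real.norm_eq_abs] using norm_integral_le_integral_norm (μ := μ.restrict (S L)) f
    by_cases hc : (μ (S L)).toReal = 0
    · rw [hA]; simp [hc]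
    · have hcpos : 0 < (μ (S L)).toReal := lt_of_le_of_ne ENNReal.toReal_nonneg (Ne.symm hc)
      have h1 : |(∫ x in S L, f x ∂μ) / (μ (S L)).toReal| ≤ A L := by
        rw [abs_div, abs_of_nonneg ENNReal.toReal_nonneg, hA]
        exact (div_le_div_iff_of_pos_right hcpos).mpr habs
      nlinarith [sq_abs ((∫ x in S L, f x ∂μ) / (μ (S L)).toReal),
        abs_nonneg ((∫ x in S L, f x ∂μ) / (μ (S L)).toReal), h1]
  suffices hmain : ∑ L ∈ 𝔊, a L * A L ^ 2 ≤ 4 * ∫ x, g x ^ 2 ∂μ by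
    rw [← hsqeq]
    refine le_trans (Finset.sum_le_sum fun L hL => ?_) hmain
    exact mul_le_mul_of_nonneg_left (hfg L) (ha L)
  -- the sorted list of positive values of A on 𝔊, with 0 appended
  set V : Finset ℝ := (𝔊.image A).filter (fun t => 0 < t) with hV
  set l : List ℝ := V.sort (· ≥ ·) ++ [0] with hl
  have hVpos : ∀ u ∈ V.sort (· ≥ ·), 0 < u := fun u hu =>
    (Finset.mem_filter.mp ((Finset.mem_sort _).mp hu)).2
  have hchain : List.Chain' (· > ·) l := by
    refine List.isChain_iff_pairwise.mpr ?_
    rw [hl, List.pairwise_append]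
    refine ⟨?_, by simp, ?_⟩
    · have h1 := Finset.pairwise_sort V (· ≥ ·)
      have h2 := Finset.sort_nodup V (· ≥ ·)
      exact (List.Pairwise.and h1 h2).imp (fun h => lt_of_le_of_ne h.1 (Ne.symm h.2))
    · intro x hx y hy
      rcases List.mem_singleton.mp hy with rfl
      exact hVpos x hx
  have h0le : ∀ u ∈ l, 0 ≤ u := by
    intro u hu
    rw [hl] at hu
    rcases List.mem_append.mp hu with h | h
    · exact (hVpos u h).le
    · rcases List.mem_singleton.mp h with rfl; exact le_rfl
  have hpair : ∀ p ∈ l.zip l.tail, 0 ≤ p.2 ∧ p.2 < p.1 := by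
    intro p hp
    obtain ⟨hlt, _, h2⟩ := zip_tail_mem l hchain p hp
    exact ⟨h0le _ h2, hlt⟩
  set F : ℝ → Set α := fun t => ⋃ L ∈ 𝔊.filter (fun L => t ≤ A L), S L with hFdef
  have hFmeas : ∀ t, MeasurableSet (F t) := by
    intro t
    rw [hFdef]
    exact Finset.measurableSet_biUnion _ (fun L _ => hSm L)
  have hcov : ∀ p ∈ l.zip l.tail,
      (∑ L ∈ 𝔊.filter (fun L => p.1 ≤ A L), a L ≤ (μ (F p.1)).toReal) ∧
        p.1 * (μ (F p.1)).toReal ≤ ∫ x in F p.1, g x ∂μ := by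
    intro p _
    have hcore := covering μ S hSm hlat a ha hCarl g hgi p.1
      (𝔊.filter (fun L => p.1 ≤ A L)) ?_
    · simpa only [hFdef] using hcore
    · intro L hL
      have hAL : p.1 ≤ A L := (Finset.mem_filter.mp hL).2
      by_cases hc : (μ (S L)).toReal = 0
      · rw [hc, mul_zero]
        exact setIntegral_nonneg (hSm L) (fun x _ => hg0 x)
      · have hcpos : 0 < (μ (S L)).toReal := lt_of_le_of_ne ENNReal.toReal_nonneg (Ne.symm hc)
        rw [hA] at hAL
        exact (le_div_iff₀ hcpos).mp hAL
  -- step 1 : ∑ a L * A L ^ 2 ≤ I₂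
  have key1 : ∑ L ∈ 𝔊, a L * A L ^ 2
      ≤ ((l.zip l.tail).map fun p => (p.1 ^ 2 - p.2 ^ 2) * (μ (F p.1)).toReal).sum := by
    calc ∑ L ∈ 𝔊, a L * A L ^ 2
        ≤ ∑ L ∈ 𝔊, ((l.zip l.tail).map fun p =>
            a L * (if p.1 ≤ A L then p.1 ^ 2 - p.2 ^ 2 else 0)).sum := by
          refine Finset.sum_le_sum (fun L hL => ?_)
          rw [List.sum_map_mul_left]
          refine mul_le_mul_of_nonneg_left ?_ (ha L)
          by_cases hAL : 0 < A L
          · have hmem : A L ∈ l := by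
              rw [hl]
              refine List.mem_append_left _ ?_
              rw [Finset.mem_sort]
              exact Finset.mem_filter.mpr ⟨Finset.mem_image_of_mem A hL, hAL⟩
            have hlast : l.getLastD 0 = 0 := by rw [hl]; exact List.getLastD_concat
            have ht := zip_tele (fun t => t ^ 2) l hchain (A L) hmem
            rw [hlast] at ht
            norm_num at ht
            exact le_of_eq ht.symm
          · have h0 : A L = 0 := le_antisymm (not_lt.mp hAL) (hA0 L)
            rw [h0]
            have : (0:ℝ) ^ 2 = 0 := by norm_num
            rw [this]
            refine List.sum_nonneg ?_
            intro x hx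
            obtain ⟨p, hp, rfl⟩ := List.mem_map.mp hx
            obtain ⟨h2, hlt⟩ := hpair p hp
            split_ifs
            · nlinarith
            · exact le_rfl
      _ = ((l.zip l.tail).map fun p =>
            ∑ L ∈ 𝔊, a L * (if p.1 ≤ A L then p.1 ^ 2 - p.2 ^ 2 else 0)).sum :=
          finset_sum_list_sum _ _ _
      _ = ((l.zip l.tail).map fun p =>
            (p.1 ^ 2 - p.2 ^ 2) * ∑ L ∈ 𝔊.filter (fun L => p.1 ≤ A L), a L).sum := by
          congr 1
          refine List.map_congr_left (fun p _ => ?_)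
          rw [Finset.sum_filter, Finset.mul_sum]
          refine Finset.sum_congr rfl (fun L _ => ?_)
          split_ifs <;> ring
      _ ≤ ((l.zip l.tail).map fun p => (p.1 ^ 2 - p.2 ^ 2) * (μ (F p.1)).toReal).sum := by
          refine List.sum_le_sum (fun p hp => ?_)
          obtain ⟨h2, hlt⟩ := hpair p hp
          exact mul_le_mul_of_nonneg_left ((hcov p hp).1) (by nlinarith)
  -- step 2 : I₂ ≤ 2 J
  have key2 : ((l.zip l.tail).map fun p => (p.1 ^ 2 - p.2 ^ 2) * (μ (F p.1)).toReal).sum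
      ≤ 2 * ((l.zip l.tail).map fun p => (p.1 - p.2) * ∫ x in F p.1, g x ∂μ).sum := by
    rw [← List.sum_map_mul_left]
    refine List.sum_le_sum (fun p hp => ?_)
    obtain ⟨h2, hlt⟩ := hpair p hp
    have hc := (hcov p hp).2
    have hμ0 : (0:ℝ) ≤ (μ (F p.1)).toReal := ENNReal.toReal_nonneg
    have e1 : 2 * (p.1 - p.2) * (p.1 * (μ (F p.1)).toReal)
        ≤ 2 * (p.1 - p.2) * (∫ x in F p.1, g x ∂μ) :=
      mul_le_mul_of_nonneg_left hc (by linarith)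
    nlinarith [mul_nonneg (mul_self_nonneg (p.1 - p.2)) hμ0]
  -- representation of g * M as a sum of indicator functions
  have hrepr : (fun x => g x * ((l.zip l.tail).map fun p =>
        if x ∈ F p.1 then p.1 - p.2 else 0).sum)
      = fun x => ((l.zip l.tail).map fun p =>
        (F p.1).indicator (fun y => (p.1 - p.2) * g y) x).sum := by
    funext x
    rw [← List.sum_map_mul_left]
    congr 1
    refine List.map_congr_left (fun p _ => ?_)
    by_cases hx : x ∈ F p.1 <;> simp [Set.indicator_apply, hx, mul_comm]
  have hintM : Integrable (fun x => g x * ((l.zip l.tail).map fun p =>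
      if x ∈ F p.1 then p.1 - p.2 else 0).sum) μ := by
    rw [hrepr]
    exact integrable_list_sum _ _ (fun p _ => (hgi.const_mul _).indicator (hFmeas p.1))
  have hintind : ∀ (p : ℝ × ℝ), Integrable
      (fun x => if x ∈ F p.1 then p.1 ^ 2 - p.2 ^ 2 else 0) μ := by
    intro p
    have := (integrable_const (p.1 ^ 2 - p.2 ^ 2) (μ := μ)).indicator (hFmeas p.1)
    refine this.congr (Filter.Eventually.of_forall fun x => ?_)
    simp [Set.indicator_apply]
  have hintN : Integrable (fun x => g x ^ 2 + (1/4) * ((l.zip l.tail).map fun p =>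
      if x ∈ F p.1 then p.1 ^ 2 - p.2 ^ 2 else 0).sum) μ := by
    refine hgsq.add ?_
    exact (integrable_list_sum _ _ (fun p _ => hintind p)).const_mul _
  -- pointwise bound  g·M ≤ g² + N/4
  have hptwise : ∀ x, g x * ((l.zip l.tail).map fun p =>
        if x ∈ F p.1 then p.1 - p.2 else 0).sum
      ≤ g x ^ 2 + (1/4) * ((l.zip l.tail).map fun p =>
        if x ∈ F p.1 then p.1 ^ 2 - p.2 ^ 2 else 0).sum := by
    intro x
    obtain ⟨hk1, hk2⟩ := zip_key (fun u => x ∈ F u) l hchain h0le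
    nlinarith [sq_nonneg (g x - ((l.zip l.tail).map fun p =>
      if x ∈ F p.1 then p.1 - p.2 else 0).sum / 2), hk2]
  -- integrate
  have hJ : ∫ x, g x * ((l.zip l.tail).map fun p =>
        if x ∈ F p.1 then p.1 - p.2 else 0).sum ∂μ
      = ((l.zip l.tail).map fun p => (p.1 - p.2) * ∫ x in F p.1, g x ∂μ).sum := by
    rw [hrepr, integral_list_sum _ _ (fun p _ => (hgi.const_mul _).indicator (hFmeas p.1))]
    congr 1
    refine List.map_congr_left (fun p _ => ?_)
    rw [integral_indicator (hFmeas p.1), integral_const_mul]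
  have hN : ∫ x, (g x ^ 2 + (1/4) * ((l.zip l.tail).map fun p =>
        if x ∈ F p.1 then p.1 ^ 2 - p.2 ^ 2 else 0).sum) ∂μ
      = (∫ x, g x ^ 2 ∂μ) + (1/4) *
        ((l.zip l.tail).map fun p => (p.1 ^ 2 - p.2 ^ 2) * (μ (F p.1)).toReal).sum := by
    rw [integral_add hgsq ((integrable_list_sum _ _ (fun p _ => hintind p)).const_mul _),
      integral_const_mul, integral_list_sum _ _ (fun p _ => hintind p)]
    congr 2
    congr 1
    refine List.map_congr_left (fun p _ => ?_)
    have := integral_indicator_const (p.1 ^ 2 - p.2 ^ 2) (hFmeas p.1) (μ := μ)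
    simpa [Set.indicator_apply, smul_eq_mul, mul_comm, Measure.real_def] using this
  have hJle : ((l.zip l.tail).map fun p => (p.1 - p.2) * ∫ x in F p.1, g x ∂μ).sum
      ≤ (∫ x, g x ^ 2 ∂μ) + (1/4) *
        ((l.zip l.tail).map fun p => (p.1 ^ 2 - p.2 ^ 2) * (μ (F p.1)).toReal).sum := by
    rw [← hJ, ← hN]
    exact integral_mono hintM hintN hptwise
  linarith [key1, key2, hJle]
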